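/- Let p be prime and a, m, n ∈ {1,...,p-1} with not both m = p-1 and n = p-1. Then the sum over k from 0 to p-1 of (a+k)^m · k^n is congruent mod p to -a^(m+n-p+1) · C(m, p-1-n), where the term is interpreted as 0 when m+n < p-1 (since C(m,p-1-n) = 0 in that case). -/

import Mathlib

open Finset

lemma sum_range_zmod {p : ℕ} [NeZero p] {M : Type*} [AddCommMonoid M] (f : ZMod p → M) :
    ∑ k ∈ Finset.range p, f (k : ZMod p) = ∑ x : ZMod p, f x := by
  refine Finset.sum_nbij' (fun k => (k : ZMod p)) (fun x => x.val) ?_ ?_ ?_ ?_ ?_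
  · intro k hk; exact Finset.mem_univ _
  · intro x hx; exact Finset.mem_range.mpr (ZMod.val_lt x)
  · intro k hk; exact ZMod.val_cast_of_lt (Finset.mem_range.mp hk)
  · intro x hx; exact ZMod.natCast_rightInverse x
  · intro k hk; rfl

lemma sum_pow_field {K : Type*} [Field K] [Fintype K] (i : ℕ) (hi : i ≠ 0) :
    ∑ x : K, x ^ i = if Fintype.card K - 1 ∣ i then -1 else 0 := by
  classical
  let φ : Kˣ ↪ K := ⟨fun x ↦ x, fun _ _ h => Units.ext h⟩
  have hmap : univ.map φ = univ \ {0} := by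
    ext x
    simp only [mem_map, mem_univ, Function.Embedding.coeFn_mk, true_and, mem_sdiff,
      mem_singleton, φ]
    exact isUnit_iff_ne_zero
  calc
    ∑ x : K, x ^ i = ∑ x ∈ univ \ {(0 : K)}, x ^ i := by
      rw [← sum_sdiff ({0} : Finset K).subset_univ, sum_singleton, zero_pow hi, add_zero]
    _ = ∑ x : Kˣ, (x ^ i : K) := by simp [φ, ← hmap, univ.sum_map φ]; rfl
    _ = _ := FiniteField.sum_pow_units K i

lemma sum_pow_range (p t : ℕ) [Fact p.Prime] (ht : t ≠ 0) :
    (∑ k ∈ Finset.range p, (k : ZMod p) ^ t) = if (p - 1) ∣ t then -1 else 0 := by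
  rw [sum_range_zmod (fun x : ZMod p => x ^ t), sum_pow_field t ht, ZMod.card]

theorem sum_product_shift_k (p a m n : ℕ) [Fact p.Prime]
    (ha : 1 ≤ a ∧ a ≤ p - 1) (hm : 1 ≤ m ∧ m ≤ p - 1) (hn : 1 ≤ n ∧ n ≤ p - 1)
    (h : ¬(m = p - 1 ∧ n = p - 1)) :
    (∑ k ∈ Finset.range p, ((a : ZMod p) + (k : ZMod p)) ^ m * (k : ZMod p) ^ n) =
      -(a : ZMod p) ^ ((m : ℤ) + (n : ℤ) - (p : ℤ) + 1) * (m.choose (p - 1 - n) : ZMod p) := by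
  obtain ⟨hm1, hm2⟩ := hm
  obtain ⟨hn1, hn2⟩ := hn
  have hp : p.Prime := Fact.out
  have hp2 : 2 ≤ p := hp.two_le
  have expand : ∀ k : ZMod p, ((a : ZMod p) + k) ^ m * k ^ n
      = ∑ j ∈ Finset.range (m + 1),
          (a : ZMod p) ^ (m - j) * (m.choose j : ZMod p) * k ^ (j + n) := by
    intro k
    rw [add_comm (a : ZMod p) k, add_pow, Finset.sum_mul]
    refine Finset.sum_congr rfl fun j hj => ?_
    rw [pow_add]; ring
  calc
    (∑ k ∈ Finset.range p, ((a : ZMod p) + (k : ZMod p)) ^ m * (k : ZMod p) ^ n)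
        = ∑ k ∈ Finset.range p, ∑ j ∈ Finset.range (m + 1),
            (a : ZMod p) ^ (m - j) * (m.choose j : ZMod p) * (k : ZMod p) ^ (j + n) := by
          refine Finset.sum_congr rfl fun k _ => expand _
    _ = ∑ j ∈ Finset.range (m + 1), (a : ZMod p) ^ (m - j) * (m.choose j : ZMod p)
          * ∑ k ∈ Finset.range p, (k : ZMod p) ^ (j + n) := by
          rw [Finset.sum_comm]
          exact Finset.sum_congr rfl fun j _ => by rw [Finset.mul_sum]
    _ = ∑ j ∈ Finset.range (m + 1),
          (if j = p - 1 - n then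
            -((a : ZMod p) ^ (m - j) * (m.choose j : ZMod p)) else 0) := by
          refine Finset.sum_congr rfl fun j hj => ?_
          have hjm : j ≤ m := Nat.lt_succ_iff.mp (Finset.mem_range.mp hj)
          rw [sum_pow_range p (j + n) (by omega)]
          have hdvd : (p - 1) ∣ (j + n) ↔ j = p - 1 - n := by
            constructor
            · rintro ⟨c, hc⟩
              have hc2 : c ≤ 2 := by nlinarith
              interval_cases c <;> omega
            · intro hj'; exact ⟨1, by omega⟩
          by_cases hcase : j = p - 1 - n
          · rw [if_pos (hdvd.mpr hcase), if_pos hcase]; ring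
          · rw [if_neg (fun hd => hcase (hdvd.mp hd)), if_neg hcase, mul_zero]
    _ = -(a : ZMod p) ^ ((m : ℤ) + (n : ℤ) - (p : ℤ) + 1) * (m.choose (p - 1 - n) : ZMod p) := by
          rw [Finset.sum_ite_eq' (Finset.range (m + 1)) (p - 1 - n)]
          by_cases hle : p - 1 - n ≤ m
          · rw [if_pos (Finset.mem_range.mpr (Nat.lt_succ_iff.mpr hle))]
            have hz : (m : ℤ) + (n : ℤ) - (p : ℤ) + 1 = ((m - (p - 1 - n) : ℕ) : ℤ) := by omega
            rw [hz, zpow_natCast]; ring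
          · rw [if_neg (fun hmem => hle (Nat.lt_succ_iff.mp (Finset.mem_range.mp hmem)))]
            rw [Nat.choose_eq_zero_of_lt (by omega), Nat.cast_zero, mul_zero]
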